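/- Let c1 > 0 and c2 > 0 and consider the two-player game Γ_2^c in which player 1 has actions {a1,a2,a3}, player 2 has actions {b1,b2,b3}, and payoffs (u_1,u_2) are: (a1,b1)↦(1,1), (a1,b2)↦(0,0), (a1,b3)↦(−7−c1,−7−c2), (a2,b1)↦(0,0), (a2,b2)↦(0,0), (a2,b3)↦(−7,−7), (a3,b1)↦(−7−c1,−7−c2), (a3,b2)↦(−7,−7), (a3,b3)↦(−7,−7). Then the set of Nash equilibria of Γ_2^c is exactly the three pure profiles {(a1,b1), (a2,b2), (a3,b3)}. -/

import Mathlib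

open Filter Topology

section GameDefs

variable {N : Type} [Fintype N] [DecidableEq N] {A : N → Type}
  [∀ i, Fintype (A i)] [∀ i, DecidableEq (A i)]

/-- A mixed-strategy profile: each `σ i` is a probability distribution on `A i`. -/
def IsStrategy (σ : ∀ i, A i → ℝ) : Prop :=
  (∀ i a, 0 ≤ σ i a) ∧ ∀ i, ∑ a, σ i a = 1

/-- An interior profile places positive probability on every action. -/
def Interior (σ : ∀ i, A i → ℝ) : Prop :=
  ∀ i a, 0 < σ i a

/-- Expected utility of player `i` at profile `σ`. -/
noncomputable def expUtil (u : ∀ i : N, (∀ j, A j) → ℝ) (σ : ∀ i, A i → ℝ) (i : N) : ℝ :=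
  ∑ a : ∀ j, A j, u i a * ∏ j, σ j (a j)

/-- Expected utility of player `i` from playing action `ai` against `σ₋ᵢ`. -/
noncomputable def devUtil (u : ∀ i : N, (∀ j, A j) → ℝ) (σ : ∀ i, A i → ℝ)
    (i : N) (ai : A i) : ℝ :=
  expUtil u (Function.update σ i (fun b => if b = ai then (1 : ℝ) else 0)) i

/-- Nash equilibrium. -/
def IsNash (u : ∀ i : N, (∀ j, A j) → ℝ) (σ : ∀ i, A i → ℝ) : Prop :=
  IsStrategy σ ∧ ∀ (i : N) (μ : A i → ℝ), (∀ a, 0 ≤ μ a) → (∑ a, μ a = 1) →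
    expUtil u (Function.update σ i μ) i ≤ expUtil u σ i

/-- Weak payoff monotonicity: differences in behavior reveal differences in payoffs. -/
def WeaklyPayoffMonotone (u : ∀ i : N, (∀ j, A j) → ℝ) (σ : ∀ i, A i → ℝ) : Prop :=
  IsStrategy σ ∧ ∀ (i : N) (ai bi : A i), σ i bi < σ i ai →
    devUtil u σ i bi < devUtil u σ i ai

/-- Payoff monotonicity. -/
def PayoffMonotone (u : ∀ i : N, (∀ j, A j) → ℝ) (σ : ∀ i, A i → ℝ) : Prop :=
  IsStrategy σ ∧ ∀ (i : N) (ai bi : A i),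
    σ i bi ≤ σ i ai ↔ devUtil u σ i bi ≤ devUtil u σ i ai

/-- Pointwise convergence of a sequence of profiles. -/
def ConvergesTo (s : ℕ → ∀ i, A i → ℝ) (σ : ∀ i, A i → ℝ) : Prop :=
  ∀ (i : N) (ai : A i), Tendsto (fun n => s n i ai) atTop (𝓝 (σ i ai))

/-- Empirical equilibrium: a Nash equilibrium that is the limit of weakly payoff
monotone profiles. -/
def IsEmpirical (u : ∀ i : N, (∀ j, A j) → ℝ) (σ : ∀ i, A i → ℝ) : Prop :=
  IsNash u σ ∧ ∃ s : ℕ → ∀ i, A i → ℝ,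
    (∀ n, WeaklyPayoffMonotone u (s n)) ∧ ConvergesTo s σ

/-- Proper equilibrium (Myerson). -/
def IsProper (u : ∀ i : N, (∀ j, A j) → ℝ) (σ : ∀ i, A i → ℝ) : Prop :=
  IsStrategy σ ∧ ∃ s : ℕ → ∀ i, A i → ℝ,
    (∀ n, IsStrategy (s n) ∧ Interior (s n) ∧
      ∀ (i : N) (ai bi : A i),
        devUtil u (s n) i bi < devUtil u (s n) i ai →
          s n i bi ≤ (1 / (n + 1) : ℝ) * s n i ai) ∧
    ConvergesTo s σ

/-- Perfect equilibrium (Selten, in Myerson's formulation). -/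
def IsPerfect (u : ∀ i : N, (∀ j, A j) → ℝ) (σ : ∀ i, A i → ℝ) : Prop :=
  IsStrategy σ ∧ ∃ s : ℕ → ∀ i, A i → ℝ,
    (∀ n, IsStrategy (s n) ∧ Interior (s n) ∧
      ∀ (i : N) (ai : A i), (1 / (n + 1) : ℝ) < s n i ai →
        ∀ bi : A i, devUtil u (s n) i bi ≤ devUtil u (s n) i ai) ∧
    ConvergesTo s σ

/-- `bi` weakly dominates `ai` for player `i`. -/
def WeaklyDominates (u : ∀ i : N, (∀ j, A j) → ℝ) (i : N) (bi ai : A i) : Prop :=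
  (∀ a : ∀ j, A j, u i (Function.update a i ai) ≤ u i (Function.update a i bi)) ∧
  ∃ a : ∀ j, A j, u i (Function.update a i ai) < u i (Function.update a i bi)

/-- Undominated Nash equilibrium. -/
def IsUndominatedNash (u : ∀ i : N, (∀ j, A j) → ℝ) (σ : ∀ i, A i → ℝ) : Prop :=
  IsNash u σ ∧ ∀ (i : N) (ai : A i), 0 < σ i ai →
    ¬ ∃ bi : A i, WeaklyDominates u i bi ai

end GameDefs

/-- A regular quantal response function on a finite set of actions `B`:
interiority, continuity, responsiveness, and monotonicity. -/
def IsRegularQRF {B : Type} [Fintype B] [DecidableEq B]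
    (p : (B → ℝ) → (B → ℝ)) : Prop :=
  (∀ x, (∀ a, 0 < p x a) ∧ ∑ a, p x a = 1) ∧
  Continuous p ∧
  (∀ (x : B → ℝ) (η : ℝ) (a : B), 0 < η →
    p x a < p (Function.update x a (x a + η)) a) ∧
  ∀ (x : B → ℝ) (a b : B), x b < x a → p x b < p x a

section QREDefs

variable {N : Type} [Fintype N] [DecidableEq N] {A : N → Type}
  [∀ i, Fintype (A i)] [∀ i, DecidableEq (A i)]

/-- Quantal response equilibrium with respect to a profile of QRFs `p`. -/
def IsQRE (u : ∀ i : N, (∀ j, A j) → ℝ) (p : ∀ i, (A i → ℝ) → (A i → ℝ))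
    (σ : ∀ i, A i → ℝ) : Prop :=
  ∀ i : N, σ i = p i (fun ai => devUtil u σ i ai)

/-- A sequence of profiles of QRFs is utility maximizing in the limit. -/
def UtilityMaximizingInLimit (u : ∀ i : N, (∀ j, A j) → ℝ)
    (p : ℕ → ∀ i, (A i → ℝ) → (A i → ℝ)) : Prop :=
  ∀ (s : ℕ → ∀ i, A i → ℝ) (σ : ∀ i, A i → ℝ),
    (∀ n, IsQRE u (p n) (s n)) → ConvergesTo s σ → IsNash u σ

/-- `σ` is approachable by regular QRE that are utility maximizing in the limit. -/
def ApproachableByRegularQRE (u : ∀ i : N, (∀ j, A j) → ℝ) (σ : ∀ i, A i → ℝ) : Prop :=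
  ∃ p : ℕ → ∀ i, (A i → ℝ) → (A i → ℝ),
    (∀ n i, IsRegularQRF (p n i)) ∧ UtilityMaximizingInLimit u p ∧
    ∃ s : ℕ → ∀ i, A i → ℝ, (∀ n, IsQRE u (p n) (s n)) ∧ ConvergesTo s σ

end QREDefs

/-- A control cost function (van Damme), bundled with its derivative on `(0,1]`. -/
structure ControlCost where
  f : ℝ → ℝ
  f' : ℝ → ℝ
  hasDeriv : ∀ x ∈ Set.Ioc (0:ℝ) 1, HasDerivWithinAt f (f' x) (Set.Ioc (0:ℝ) 1) x
  contDeriv : ContinuousOn f' (Set.Ioc (0:ℝ) 1)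
  anti : StrictAntiOn f (Set.Ioc (0:ℝ) 1)
  convex : StrictConvexOn ℝ (Set.Ioc (0:ℝ) 1) f
  atOne : f 1 = 0
  blowup : Tendsto f (nhdsWithin 0 (Set.Ioi (0:ℝ))) atTop

/-- The game Γ₂ᶜ (Table 2). Player `0` is player 1 (actions `0 = a1`, `1 = a2`,
`2 = a3`); player `1` is player 2 (actions `0 = b1`, `1 = b2`, `2 = b3`). -/
noncomputable def uGammaC (c1 c2 : ℝ) : ∀ _ : Fin 2, (Fin 2 → Fin 3) → ℝ := fun i a =>
  if i = 0 then
    ![![(1:ℝ), 0, -7 - c1], ![0, 0, -7], ![-7 - c1, -7, -7]] (a 0) (a 1)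
  else
    ![![(1:ℝ), 0, -7 - c2], ![0, 0, -7], ![-7 - c2, -7, -7]] (a 0) (a 1)


lemma expand0 (c1 c2 : ℝ) (τ : ∀ _ : Fin 2, Fin 3 → ℝ) :
    expUtil (uGammaC c1 c2) τ 0 =
      τ 0 0 * (τ 1 0 - (7+c1) * τ 1 2) + τ 0 1 * (-7 * τ 1 2)
        + τ 0 2 * (-(7+c1) * τ 1 0 - 7 * τ 1 1 - 7 * τ 1 2) := by
  unfold expUtil
  rw [← Equiv.sum_comp (finTwoArrowEquiv (Fin 3)).symm]
  rw [Fintype.sum_prod_type]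
  simp [Fin.sum_univ_three, Fin.prod_univ_two, uGammaC, finTwoArrowEquiv,
    Matrix.vecHead, Matrix.vecTail]
  ring

lemma expand1 (c1 c2 : ℝ) (τ : ∀ _ : Fin 2, Fin 3 → ℝ) :
    expUtil (uGammaC c1 c2) τ 1 =
      τ 1 0 * (τ 0 0 - (7+c2) * τ 0 2) + τ 1 1 * (-7 * τ 0 2)
        + τ 1 2 * (-(7+c2) * τ 0 0 - 7 * τ 0 1 - 7 * τ 0 2) := by
  unfold expUtil
  rw [← Equiv.sum_comp (finTwoArrowEquiv (Fin 3)).symm]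
  rw [Fintype.sum_prod_type]
  simp [Fin.sum_univ_three, Fin.prod_univ_two, uGammaC, finTwoArrowEquiv,
    Matrix.vecHead, Matrix.vecTail]
  ring

lemma updEval0 (σ : ∀ _ : Fin 2, Fin 3 → ℝ) (μ : Fin 3 → ℝ) :
    Function.update σ 0 μ 0 = μ ∧ Function.update σ 0 μ 1 = σ 1 :=
  ⟨Function.update_self 0 μ σ, Function.update_of_ne (by decide) μ σ⟩

lemma updEval1 (σ : ∀ _ : Fin 2, Fin 3 → ℝ) (μ : Fin 3 → ℝ) :
    Function.update σ 1 μ 1 = μ ∧ Function.update σ 1 μ 0 = σ 0 :=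
  ⟨Function.update_self 1 μ σ, Function.update_of_ne (by decide) μ σ⟩

lemma dev0 (c1 c2 : ℝ) (σ : ∀ _ : Fin 2, Fin 3 → ℝ) (μ : Fin 3 → ℝ) :
    expUtil (uGammaC c1 c2) (Function.update σ 0 μ) 0 =
      μ 0 * (σ 1 0 - (7+c1) * σ 1 2) + μ 1 * (-7 * σ 1 2)
        + μ 2 * (-(7+c1) * σ 1 0 - 7 * σ 1 1 - 7 * σ 1 2) := by
  rw [expand0, (updEval0 σ μ).1, (updEval0 σ μ).2]

lemma dev1 (c1 c2 : ℝ) (σ : ∀ _ : Fin 2, Fin 3 → ℝ) (μ : Fin 3 → ℝ) :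
    expUtil (uGammaC c1 c2) (Function.update σ 1 μ) 1 =
      μ 0 * (σ 0 0 - (7+c2) * σ 0 2) + μ 1 * (-7 * σ 0 2)
        + μ 2 * (-(7+c2) * σ 0 0 - 7 * σ 0 1 - 7 * σ 0 2) := by
  rw [expand1, (updEval1 σ μ).1, (updEval1 σ μ).2]

/-- Support lemma: if the third action has positive probability and the first two
pure actions are no better than the mixture, the mixture is at most `A3`. -/
lemma support_le (p1 p2 p3 A1 A2 A3 : ℝ) (h1 : 0 ≤ p1) (h2 : 0 ≤ p2) (h3 : 0 < p3)
    (hs : p1 + p2 + p3 = 1)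
    (d1 : A1 ≤ p1 * A1 + p2 * A2 + p3 * A3)
    (d2 : A2 ≤ p1 * A1 + p2 * A2 + p3 * A3) :
    p1 * A1 + p2 * A2 + p3 * A3 ≤ A3 := by
  have hp3 : p3 = 1 - p1 - p2 := by linarith
  subst hp3
  nlinarith [mul_le_mul_of_nonneg_left d1 h1, mul_le_mul_of_nonneg_left d2 h2]

/-- for every c1, c2 > 0, the Nash equilibria of Γ₂ᶜ are exactly the
three pure profiles (a1,b1), (a2,b2), (a3,b3). -/
theorem gammaC_nash_set (c1 c2 : ℝ) (hc1 : 0 < c1) (hc2 : 0 < c2)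
    (σ : ∀ _ : Fin 2, Fin 3 → ℝ) (hσ : IsStrategy σ) :
    IsNash (uGammaC c1 c2) σ ↔
      ((σ 0 0 = 1 ∧ σ 1 0 = 1) ∨ (σ 0 1 = 1 ∧ σ 1 1 = 1) ∨ (σ 0 2 = 1 ∧ σ 1 2 = 1)) := by
  have hs0 : σ 0 0 + σ 0 1 + σ 0 2 = 1 := by
    have := hσ.2 0; rwa [Fin.sum_univ_three] at this
  have hs1 : σ 1 0 + σ 1 1 + σ 1 2 = 1 := by
    have := hσ.2 1; rwa [Fin.sum_univ_three] at this
  constructor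
  · intro hN
    have h1 := hN.2 0 ![(1:ℝ),0,0] (by intro a; fin_cases a <;> norm_num)
      (by rw [Fin.sum_univ_three]; norm_num [Matrix.cons_val_two, Matrix.vecHead, Matrix.vecTail])
    have h2 := hN.2 0 ![(0:ℝ),1,0] (by intro a; fin_cases a <;> norm_num)
      (by rw [Fin.sum_univ_three]; norm_num [Matrix.cons_val_two, Matrix.vecHead, Matrix.vecTail])
    have h3 := hN.2 0 ![(0:ℝ),0,1] (by intro a; fin_cases a <;> norm_num)
      (by rw [Fin.sum_univ_three]; norm_num [Matrix.cons_val_two, Matrix.vecHead, Matrix.vecTail])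
    have g1 := hN.2 1 ![(1:ℝ),0,0] (by intro a; fin_cases a <;> norm_num)
      (by rw [Fin.sum_univ_three]; norm_num [Matrix.cons_val_two, Matrix.vecHead, Matrix.vecTail])
    have g2 := hN.2 1 ![(0:ℝ),1,0] (by intro a; fin_cases a <;> norm_num)
      (by rw [Fin.sum_univ_three]; norm_num [Matrix.cons_val_two, Matrix.vecHead, Matrix.vecTail])
    have g3 := hN.2 1 ![(0:ℝ),0,1] (by intro a; fin_cases a <;> norm_num)
      (by rw [Fin.sum_univ_three]; norm_num [Matrix.cons_val_two, Matrix.vecHead, Matrix.vecTail])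
    rw [dev0, expand0] at h1 h2 h3
    rw [dev1, expand1] at g1 g2 g3
    norm_num [Matrix.cons_val_two, Matrix.vecHead, Matrix.vecTail] at h1 h2 h3 g1 g2 g3
    have step1 : 0 < σ 0 2 → σ 1 0 = 0 ∧ σ 1 1 = 0 := by
      intro h
      have hU := support_le (σ 0 0) (σ 0 1) (σ 0 2)
        (σ 1 0 - (7+c1) * σ 1 2) (-7 * σ 1 2)
        (-(7+c1) * σ 1 0 - 7 * σ 1 1 - 7 * σ 1 2)
        (hσ.1 0 0) (hσ.1 0 1) h hs0 (by linarith [h1]) (by linarith [h2])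
      constructor <;>
        linarith [mul_nonneg hc1.le (hσ.1 1 0), hσ.1 1 0, hσ.1 1 1, h2, hU]
    have step2 : 0 < σ 1 2 → σ 0 0 = 0 ∧ σ 0 1 = 0 := by
      intro h
      have hV := support_le (σ 1 0) (σ 1 1) (σ 1 2)
        (σ 0 0 - (7+c2) * σ 0 2) (-7 * σ 0 2)
        (-(7+c2) * σ 0 0 - 7 * σ 0 1 - 7 * σ 0 2)
        (hσ.1 1 0) (hσ.1 1 1) h hs1 (by linarith [g1]) (by linarith [g2])
      constructor <;>
        linarith [mul_nonneg hc2.le (hσ.1 0 0), hσ.1 0 0, hσ.1 0 1, g2, hV]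
    rcases eq_or_lt_of_le (hσ.1 1 2) with hq2 | hq2
    · rcases eq_or_lt_of_le (hσ.1 0 2) with hp2 | hp2
      · -- p2 = 0, q2 = 0
        rw [← hp2, ← hq2] at h1 h2 h3 g1 g2 g3
        rcases eq_or_lt_of_le (hσ.1 1 0) with hq0 | hq0
        · -- q0 = 0, so b2 must be played; show (a2,b2)
          rw [← hq0] at g1
          have hp0 : σ 0 0 = 0 := le_antisymm (by linarith [g1]) (hσ.1 0 0)
          exact Or.inr (Or.inl ⟨by linarith, by linarith⟩)
        · -- q0 > 0
          have hp0 : σ 0 0 = 1 := by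
            have h0le : σ 0 0 ≤ 1 := by linarith [hσ.1 0 1]
            nlinarith [h1, hq0]
          rw [hp0] at g1
          exact Or.inl ⟨hp0, by linarith [g1, hσ.1 1 1]⟩
      · -- p2 > 0, q2 = 0: contradiction via step1
        obtain ⟨hq0, hq1⟩ := step1 hp2
        exact absurd hs1 (by rw [hq0, hq1, ← hq2]; norm_num)
    · -- q2 > 0
      obtain ⟨hp0, hp1⟩ := step2 hq2
      have hp2 : σ 0 2 = 1 := by linarith
      obtain ⟨hq0, hq1⟩ := step1 (by rw [hp2]; norm_num)
      exact Or.inr (Or.inr ⟨hp2, by linarith⟩)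
  · have hcase : ∀ i : Fin 2, i = 0 ∨ i = 1 := by decide
    have n01 := hσ.1 0 1
    have n02 := hσ.1 0 2
    have n00 := hσ.1 0 0
    have n11 := hσ.1 1 1
    have n12 := hσ.1 1 2
    have n10 := hσ.1 1 0
    rintro (⟨hp, hq⟩ | ⟨hp, hq⟩ | ⟨hp, hq⟩)
    · refine ⟨hσ, ?_⟩
      intro i μ hμ0 hμs
      rw [Fin.sum_univ_three] at hμs
      have a1 : σ 0 1 = 0 := by linarith
      have a2 : σ 0 2 = 0 := by linarith
      have b1 : σ 1 1 = 0 := by linarith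
      have b2 : σ 1 2 = 0 := by linarith
      rcases hcase i with rfl | rfl
      · rw [dev0, expand0, hp, hq, a1, a2, b1, b2]
        linarith [mul_nonneg hc1.le (hμ0 0), mul_nonneg hc1.le (hμ0 2),
          hμ0 0, hμ0 1, hμ0 2, hμs]
      · rw [dev1, expand1, hp, hq, a1, a2, b1, b2]
        linarith [mul_nonneg hc2.le (hμ0 0), mul_nonneg hc2.le (hμ0 2),
          hμ0 0, hμ0 1, hμ0 2, hμs]
    · refine ⟨hσ, ?_⟩
      intro i μ hμ0 hμs
      rw [Fin.sum_univ_three] at hμs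
      have a1 : σ 0 0 = 0 := by linarith
      have a2 : σ 0 2 = 0 := by linarith
      have b1 : σ 1 0 = 0 := by linarith
      have b2 : σ 1 2 = 0 := by linarith
      rcases hcase i with rfl | rfl
      · rw [dev0, expand0, hp, hq, a1, a2, b1, b2]
        linarith [mul_nonneg hc1.le (hμ0 0), mul_nonneg hc1.le (hμ0 2),
          hμ0 0, hμ0 1, hμ0 2, hμs]
      · rw [dev1, expand1, hp, hq, a1, a2, b1, b2]
        linarith [mul_nonneg hc2.le (hμ0 0), mul_nonneg hc2.le (hμ0 2),
          hμ0 0, hμ0 1, hμ0 2, hμs]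
    · refine ⟨hσ, ?_⟩
      intro i μ hμ0 hμs
      rw [Fin.sum_univ_three] at hμs
      have a1 : σ 0 0 = 0 := by linarith
      have a2 : σ 0 1 = 0 := by linarith
      have b1 : σ 1 0 = 0 := by linarith
      have b2 : σ 1 1 = 0 := by linarith
      rcases hcase i with rfl | rfl
      · rw [dev0, expand0, hp, hq, a1, a2, b1, b2]
        linarith [mul_nonneg hc1.le (hμ0 0), mul_nonneg hc1.le (hμ0 2),
          hμ0 0, hμ0 1, hμ0 2, hμs]
      · rw [dev1, expand1, hp, hq, a1, a2, b1, b2]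
        linarith [mul_nonneg hc2.le (hμ0 0), mul_nonneg hc2.le (hμ0 2),
          hμ0 0, hμ0 1, hμ0 2, hμs]
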